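/- Let H be a complex Hilbert space and A a (bounded, for simplicity) self-adjoint strictly positive operator on H with bounded inverse, and let J be an antiunitary involution on H satisfying JAJ = A^{-1}. Set H_R = {ξ ∈ H : Jξ = ξ}. Then for every ξ ∈ H_R, the vector (2/(A^{-1}+1))^{1/2} ξ has the same norm as ξ; that is, the map ξ ↦ (2/(A^{-1}+1))^{1/2} ξ is an isometric embedding of H_R into H. -/

import Mathlib

/-- If `A` is a bounded invertible positive self-adjoint operator on a complex
Hilbert space `H`, `J` an antiunitary involution with `JAJ = A⁻¹`, and `S` the positive
self-adjoint operator `(2/(A⁻¹+1))^{1/2}` (characterized by `S² (A⁻¹+1) = 2`), then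
`ξ ↦ S ξ` is isometric on the real subspace `H_ℝ = {ξ : Jξ = ξ}`. -/
theorem stmt_0
    {H : Type*} [NormedAddCommGroup H] [InnerProductSpace ℂ H] [CompleteSpace H]
    (A Ainv S : H →L[ℂ] H) (J : H → H)
    (hA : IsSelfAdjoint A)
    (hApos : ∀ x : H, 0 ≤ (inner ℂ (A x) x : ℂ).re)
    (hAinv : A * Ainv = 1) (hAinv' : Ainv * A = 1)
    (hJadd : ∀ x y : H, J (x + y) = J x + J y)
    (hJsmul : ∀ (c : ℂ) (x : H), J (c • x) = (starRingEnd ℂ) c • J x)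
    (hJiso : ∀ x : H, ‖J x‖ = ‖x‖)
    (hJinv : ∀ x : H, J (J x) = x)
    (hJAJ : ∀ x : H, J (A (J x)) = Ainv x)
    (hS : IsSelfAdjoint S)
    (hSpos : ∀ x : H, 0 ≤ (inner ℂ (S x) x : ℂ).re)
    (hS2 : S ^ 2 * (Ainv + 1) = (2 : ℂ) • 1)
    (hS2' : (Ainv + 1) * S ^ 2 = (2 : ℂ) • 1) :
    ∀ ξ : H, J ξ = ξ → ‖S ξ‖ = ‖ξ‖ := by
  intro ξ hξ
  set T : H →L[ℂ] H := S ^ 2 with hTdef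
  -- Ainv (J y) = J (A y)
  have hAinvJ : ∀ y : H, Ainv (J y) = J (A y) := by
    intro y
    have := hJAJ (J y)
    rw [hJinv y] at this
    exact this.symm
  -- pointwise versions of hS2, hS2'
  have hS2p : ∀ x : H, T (Ainv x + x) = (2 : ℂ) • x := by
    intro x
    have := congrArg (fun f : H →L[ℂ] H => f x) hS2
    simpa using this
  have hS2p' : ∀ x : H, Ainv (T x) + T x = (2 : ℂ) • x := by
    intro x
    have := congrArg (fun f : H →L[ℂ] H => f x) hS2'
    simpa using this
  -- A (T x) = 2 • A x - T x
  have hAT : ∀ x : H, A (T x) = (2 : ℂ) • A x - T x := by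
    intro x
    have h1 : A (Ainv (T x) + T x) = A ((2 : ℂ) • x) := by rw [hS2p' x]
    have h2 : A (Ainv (T x)) = T x := by
      have := congrArg (fun f : H →L[ℂ] H => f (T x)) hAinv
      simpa using this
    rw [map_add, h2, map_smul] at h1
    linear_combination (norm := abel) h1
  -- injectivity of Ainv + 1
  have hinj : ∀ a b : H, Ainv a + a = Ainv b + b → a = b := by
    intro a b hab
    have h1 := hS2p a
    have h2 := hS2p b
    rw [hab, h2] at h1
    have : ((2 : ℂ)⁻¹ * 2 : ℂ) • a = ((2 : ℂ)⁻¹ * 2 : ℂ) • b := by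
      rw [mul_smul, mul_smul, h1]
    simpa using this
  -- key identity : J (T ξ) = 2 • ξ - T ξ
  set u : H := (2 : ℂ) • ξ - T ξ with hu
  have hJ2 : ∀ x : H, J ((2 : ℂ) • x) = (2 : ℂ) • J x := by
    intro x
    rw [hJsmul]
    norm_num [Complex.conj_ofNat]
  have hJsub : ∀ x y : H, J (x - y) = J x - J y := by
    intro x y
    have := hJadd (x - y) y
    rw [sub_add_cancel] at this
    exact eq_sub_of_add_eq this.symm
  have hAu : A u + u = (2 : ℂ) • ξ := by
    rw [hu, map_sub, map_smul, hAT]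
    abel
  have hTJ : T ξ = J u := by
    apply hinj
    rw [hS2p' ξ, hAinvJ u, ← hJadd, hAu, hJ2, hξ]
  have hkey : J (T ξ) = (2 : ℂ) • ξ - T ξ := by
    have h := congrArg J hTJ
    rw [hJinv] at h
    exact h.trans hu
  -- real parts of inner products are J-invariant
  have hre : ∀ a b : H, (inner ℂ (J a) (J b) : ℂ).re = (inner ℂ a b : ℂ).re := by
    intro a b
    have h1 : ‖J a + J b‖ = ‖a + b‖ := by rw [← hJadd, hJiso]
    have h2 := @norm_add_sq ℂ H _ _ _ (J a) (J b)
    rw [h1, hJiso, hJiso, @norm_add_sq ℂ H _ _ _ a b] at h2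
    simp only [RCLike.re_to_complex] at h2
    nlinarith [h2]
  -- compute
  have hsym := (ContinuousLinearMap.isSelfAdjoint_iff_isSymmetric.mp hS)
  have hTinner : (inner ℂ (T ξ) ξ : ℂ).re = ‖S ξ‖ ^ 2 := by
    have h : (inner ℂ (T ξ) ξ : ℂ) = inner ℂ (S ξ) (S ξ) := by
      simpa [hTdef, sq, ContinuousLinearMap.mul_apply] using hsym (S ξ) ξ
    rw [h, inner_self_eq_norm_sq_to_K]
    norm_cast
  have hmain : (inner ℂ (J (T ξ)) ξ : ℂ).re = (inner ℂ (T ξ) ξ : ℂ).re := by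
    calc (inner ℂ (J (T ξ)) ξ : ℂ).re = (inner ℂ (J (T ξ)) (J ξ) : ℂ).re := by rw [hξ]
      _ = (inner ℂ (T ξ) ξ : ℂ).re := hre _ _
  rw [hkey] at hmain
  have hsplit : (inner ℂ ((2 : ℂ) • ξ - T ξ) ξ : ℂ).re
      = 2 * ‖ξ‖ ^ 2 - (inner ℂ (T ξ) ξ : ℂ).re := by
    have hc : (inner ℂ ξ ξ : ℂ).re = ‖ξ‖ ^ 2 := by
      simpa using inner_self_eq_norm_sq (𝕜 := ℂ) (E := H) ξ
    rw [inner_sub_left, inner_smul_left]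
    simp only [Complex.conj_ofNat, Complex.sub_re, Complex.mul_re, Complex.re_ofNat,
      Complex.im_ofNat, hc]
    ring
  rw [hsplit] at hmain
  have : ‖S ξ‖ ^ 2 = ‖ξ‖ ^ 2 := by
    rw [← hTinner]; linarith
  nlinarith [norm_nonneg (S ξ), norm_nonneg ξ, this]
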